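/- Let $d \ge 1$ and let $h_1, \dots, h_d > 0$. Define $\psi_k(x) = \prod_{i=1}^d \chi(x_i/h_i - k_i)$ for $k \in \mathbb{Z}^d$, where $\chi(t) = \max(0,1-|t|)$, so that $\|\psi_k\|_{L^1} = \prod_i h_i$. Define the operator $K$ by $(Ku)(x) = \sum_{k \in \mathbb{Z}^d} \psi_k(x) \, \|\psi_k\|_{L^1}^{-1} \int_{\mathbb{R}^d} \psi_k(y) u(y)\, dy$. Then for every $p \in [1, \infty]$ and every $u \in L^p(\mathbb{R}^d)$, $Ku \in L^p(\mathbb{R}^d)$ and $\|Ku\|_p \le \|u\|_p$. -/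

import Mathlib

open BigOperators MeasureTheory ENNReal

/-- The canonical hat function on `ℝ`, centered at `0` with support `[-1,1]`. -/
noncomputable def chi (t : ℝ) : ℝ := max 0 (1 - |t|)

lemma chi_nonneg (t : ℝ) : 0 ≤ chi t := le_max_left _ _

lemma chi_continuous : Continuous chi :=
  continuous_const.max (continuous_const.sub continuous_abs)

lemma chi_eq_zero {t : ℝ} (h : 1 ≤ |t|) : chi t = 0 :=
  max_eq_left (by linarith)

lemma abs_lt_one_of_chi_ne_zero {t : ℝ} (h : chi t ≠ 0) : |t| < 1 := by
  by_contra hc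
  exact h (chi_eq_zero (not_lt.1 hc))

lemma chi_floor_cases {t : ℝ} {n : ℤ} (h : chi (t - n) ≠ 0) : n = ⌊t⌋ ∨ n = ⌊t⌋ + 1 := by
  have h1 : |t - n| < 1 := abs_lt_one_of_chi_ne_zero h
  rw [abs_lt] at h1
  have h2 : (⌊t⌋ : ℝ) ≤ t := Int.floor_le t
  have h3 : t < ⌊t⌋ + 1 := Int.lt_floor_add_one t
  have hl : (⌊t⌋ : ℤ) < n + 1 := by exact_mod_cast (by push_cast; linarith : (⌊t⌋ : ℝ) < n + 1)
  have hr : (n : ℤ) < ⌊t⌋ + 2 := by exact_mod_cast (by push_cast; linarith : (n : ℝ) < ⌊t⌋ + 2)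
  omega

lemma chi_pair_sum (t : ℝ) : chi (t - ⌊t⌋) + chi (t - (⌊t⌋ + 1 : ℤ)) = 1 := by
  have h2 : (⌊t⌋ : ℝ) ≤ t := Int.floor_le t
  have h3 : t < ⌊t⌋ + 1 := Int.lt_floor_add_one t
  have e1 : chi (t - ⌊t⌋) = 1 - (t - ⌊t⌋) := by
    rw [chi, abs_of_nonneg (by linarith)]
    exact max_eq_right (by linarith)
  have e2 : chi (t - (⌊t⌋ + 1 : ℤ)) = t - ⌊t⌋ := by
    rw [chi]
    push_cast
    rw [abs_of_nonpos (by linarith)]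
    rw [max_eq_right (by linarith)]
    ring
  rw [e1, e2]; ring

lemma chi_integral : ∫ t : ℝ, chi t = 1 := by
  have hsupp : ∀ t : ℝ, t ∉ Set.Ioc (-1 : ℝ) 1 → chi t = 0 := by
    intro t ht
    simp only [Set.mem_Ioc, not_and_or, not_lt, not_le] at ht
    apply chi_eq_zero
    rcases ht with h | h
    · rw [abs_of_nonpos (by linarith)]; linarith
    · rw [abs_of_pos (by linarith)]; linarith
  rw [← MeasureTheory.setIntegral_eq_integral_of_forall_compl_eq_zero hsupp,
      ← intervalIntegral.integral_of_le (by norm_num : (-1:ℝ) ≤ 1)]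
  have hi : ∀ a b : ℝ, IntervalIntegrable chi volume a b :=
    fun a b => chi_continuous.intervalIntegrable a b
  rw [← intervalIntegral.integral_add_adjacent_intervals (hi (-1) 0) (hi 0 1)]
  have e1 : ∫ t in (-1:ℝ)..0, chi t = ∫ t in (-1:ℝ)..0, (1 + t) := by
    apply intervalIntegral.integral_congr
    intro t ht
    rw [Set.uIcc_of_le (by norm_num : (-1:ℝ) ≤ 0)] at ht
    rw [chi, abs_of_nonpos ht.2, max_eq_right (by have := ht.1; linarith)]
    ring
  have e2 : ∫ t in (0:ℝ)..1, chi t = ∫ t in (0:ℝ)..1, (1 - t) := by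
    apply intervalIntegral.integral_congr
    intro t ht
    rw [Set.uIcc_of_le (by norm_num : (0:ℝ) ≤ 1)] at ht
    rw [chi, abs_of_nonneg ht.1, max_eq_right (by have := ht.2; linarith)]
  rw [e1, e2]
  have : ∀ a b : ℝ, IntervalIntegrable (fun t : ℝ => t) volume a b :=
    fun a b => continuous_id.intervalIntegrable a b
  rw [intervalIntegral.integral_add (intervalIntegrable_const) (this _ _),
      intervalIntegral.integral_sub (intervalIntegrable_const) (this _ _)]
  simp [integral_id]
  norm_num

lemma chi_scaled_integral {h : ℝ} (hh : 0 < h) (k : ℤ) :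
    ∫ t : ℝ, chi (t / h - k) = h := by
  have e1 : ∫ t : ℝ, chi (t / h - k) = ∫ t : ℝ, (fun s => chi (s - k)) (t / h) := rfl
  rw [e1, MeasureTheory.Measure.integral_comp_div (fun s : ℝ => chi (s - (k:ℝ))) h,
    MeasureTheory.integral_sub_right_eq_self chi (k:ℝ), chi_integral, abs_of_pos hh]
  simp

noncomputable def Psi {d : ℕ} (hstep : Fin d → ℝ) (k : Fin d → ℤ) (x : Fin d → ℝ) : ℝ :=
  ∏ i, chi (x i / hstep i - k i)

variable {d : ℕ} {hstep : Fin d → ℝ}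

lemma Psi_nonneg (k : Fin d → ℤ) (x : Fin d → ℝ) : 0 ≤ Psi hstep k x :=
  Finset.prod_nonneg fun i _ => chi_nonneg _

lemma Psi_continuous (k : Fin d → ℤ) : Continuous (Psi hstep k) :=
  continuous_finset_prod _ fun i _ =>
    chi_continuous.comp (((continuous_apply i).div_const _).sub continuous_const)

lemma Psi_hasCompactSupport (hpos : ∀ i, 0 < hstep i) (k : Fin d → ℤ) :
    HasCompactSupport (Psi hstep k) := by
  apply HasCompactSupport.intro
    (isCompact_univ_pi fun i => isCompact_Icc
      (a := ((k i : ℝ) - 1) * hstep i) (b := ((k i : ℝ) + 1) * hstep i))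
  intro x hx
  simp only [Set.mem_univ_pi, not_forall, Set.mem_Icc, not_and_or, not_le] at hx
  obtain ⟨i, hi⟩ := hx
  apply Finset.prod_eq_zero (Finset.mem_univ i)
  apply chi_eq_zero
  have h0 := hpos i
  rcases hi with h | h
  · have hle : x i / hstep i ≤ (k i : ℝ) - 1 := by
      rw [div_le_iff₀ h0]; nlinarith
    rw [abs_of_nonpos (by linarith)]
    linarith
  · have hle : (k i : ℝ) + 1 ≤ x i / hstep i := by
      rw [le_div_iff₀ h0]; nlinarith
    rw [abs_of_nonneg (by linarith)]
    linarith

lemma Psi_integrable (hpos : ∀ i, 0 < hstep i) (k : Fin d → ℤ) :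
    Integrable (Psi hstep k) :=
  (Psi_continuous k).integrable_of_hasCompactSupport (Psi_hasCompactSupport hpos k)

lemma Psi_integral (hpos : ∀ i, 0 < hstep i) (k : Fin d → ℤ) :
    ∫ y, Psi hstep k y = ∏ i, hstep i := by
  have : ∫ y : Fin d → ℝ, Psi hstep k y
      = ∫ y : Fin d → ℝ, ∏ i, (fun t => chi (t / hstep i - k i)) (y i) := rfl
  rw [this, MeasureTheory.volume_pi, MeasureTheory.integral_fintype_prod_eq_prod
    (f := fun i (t : ℝ) => chi (t / hstep i - k i))]
  exact Finset.prod_congr rfl fun i _ => chi_scaled_integral (hpos i) _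

/-- the finite set of indices that can be active at `x` -/
noncomputable def Tset (hstep : Fin d → ℝ) (x : Fin d → ℝ) : Finset (Fin d → ℤ) :=
  Fintype.piFinset fun i => {⌊x i / hstep i⌋, ⌊x i / hstep i⌋ + 1}

lemma Psi_mem_Tset {k : Fin d → ℤ} {x : Fin d → ℝ} (h : Psi hstep k x ≠ 0) :
    k ∈ Tset hstep x := by
  rw [Tset, Fintype.mem_piFinset]
  intro i
  have : chi (x i / hstep i - k i) ≠ 0 := by
    intro h0
    exact h (Finset.prod_eq_zero (Finset.mem_univ i) h0)
  have := chi_floor_cases this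
  simp only [Finset.mem_insert, Finset.mem_singleton]
  exact this

lemma sum_Psi_Tset (x : Fin d → ℝ) : ∑ k ∈ Tset hstep x, Psi hstep k x = 1 := by
  rw [Tset]
  simp only [Psi]
  rw [← Finset.prod_univ_sum (fun i => ({⌊x i / hstep i⌋, ⌊x i / hstep i⌋ + 1} : Finset ℤ)) (fun i n => chi (x i / hstep i - n))]
  rw [show (1 : ℝ) = ∏ i : Fin d, 1 by simp]
  refine Finset.prod_congr rfl fun i _ => ?_
  rw [Finset.sum_pair (by omega : ⌊x i / hstep i⌋ ≠ ⌊x i / hstep i⌋ + 1)]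
  exact chi_pair_sum _

variable {α : Type*} [MeasurableSpace α]

lemma jensen_rpow {μ : Measure α} {w f : α → ℝ≥0∞} (hw : AEMeasurable w μ)
    (hf : AEMeasurable f μ) {q : ℝ} (hq : 1 ≤ q) :
    (∫⁻ a, w a * f a ∂μ) ^ q ≤ (∫⁻ a, w a ∂μ) ^ (q - 1) * ∫⁻ a, w a * f a ^ q ∂μ := by
  rcases eq_or_lt_of_le hq with h1 | h1
  · simp [← h1]
  have hpq : (q / (q - 1)).HolderConjugate q :=
    (Real.HolderConjugate.conjExponent h1).symm
  set q' := q / (q - 1) with hq'def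
  have hq'pos : 0 < q' := hpq.pos
  have hqpos : 0 < q := by linarith
  have hpt : ∀ a, w a * f a = (w a ^ (1 / q')) * (w a ^ (1 / q) * f a) := by
    intro a
    rw [← mul_assoc, ← ENNReal.rpow_add_of_nonneg _ _ (by positivity) (by positivity),
      show (1:ℝ) / q' + 1 / q = 1 by rw [one_div, one_div, hpq.inv_add_inv_eq_one],
      ENNReal.rpow_one]
  have hmeas1 : AEMeasurable (fun a => w a ^ (1 / q')) μ := hw.pow_const _
  have hmeas2 : AEMeasurable (fun a => w a ^ (1 / q) * f a) μ := (hw.pow_const _).mul hf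
  have holder := ENNReal.lintegral_mul_le_Lp_mul_Lq μ hpq hmeas1 hmeas2
  simp only [Pi.mul_apply] at holder
  have e1 : ∀ a, (w a ^ (1 / q')) ^ q' = w a := by
    intro a
    rw [← ENNReal.rpow_mul, one_div, inv_mul_cancel₀ hq'pos.ne', ENNReal.rpow_one]
  have e2 : ∀ a, (w a ^ (1 / q) * f a) ^ q = w a * f a ^ q := by
    intro a
    rw [ENNReal.mul_rpow_of_nonneg _ _ hqpos.le, ← ENNReal.rpow_mul, one_div,
      inv_mul_cancel₀ hqpos.ne', ENNReal.rpow_one]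
  simp only [e1, e2] at holder
  have key : ∫⁻ a, w a * f a ∂μ ≤
      (∫⁻ a, w a ∂μ) ^ (1 / q') * (∫⁻ a, w a * f a ^ q ∂μ) ^ (1 / q) := by
    calc ∫⁻ a, w a * f a ∂μ = ∫⁻ a, (w a ^ (1 / q')) * (w a ^ (1 / q) * f a) ∂μ := by
          simp_rw [← hpt]
      _ ≤ _ := holder
  calc (∫⁻ a, w a * f a ∂μ) ^ q
      ≤ ((∫⁻ a, w a ∂μ) ^ (1 / q') * (∫⁻ a, w a * f a ^ q ∂μ) ^ (1 / q)) ^ q :=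
        ENNReal.rpow_le_rpow key hqpos.le
    _ = (∫⁻ a, w a ∂μ) ^ (q - 1) * ∫⁻ a, w a * f a ^ q ∂μ := by
        rw [ENNReal.mul_rpow_of_nonneg _ _ hqpos.le, ← ENNReal.rpow_mul, ← ENNReal.rpow_mul,
          one_div, one_div, inv_mul_cancel₀ hqpos.ne', ENNReal.rpow_one]
        congr 1
        congr 1
        rw [hq'def]
        field_simp

lemma per_k_bound {μ : Measure α} {w f : α → ℝ≥0∞} (hw : AEMeasurable w μ)
    (hf : AEMeasurable f μ) {H : ℝ≥0∞} (hH0 : H ≠ 0) (hHt : H ≠ ⊤)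
    (hwint : ∫⁻ a, w a ∂μ = H) {q : ℝ} (hq : 1 ≤ q) :
    (H⁻¹ * ∫⁻ a, w a * f a ∂μ) ^ q * H ≤ ∫⁻ a, w a * f a ^ q ∂μ := by
  have hqpos : (0:ℝ) < q := by linarith
  have hj := jensen_rpow hw hf hq
  rw [hwint] at hj
  rw [ENNReal.mul_rpow_of_nonneg _ _ hqpos.le]
  calc H⁻¹ ^ q * (∫⁻ a, w a * f a ∂μ) ^ q * H
      ≤ H⁻¹ ^ q * (H ^ (q - 1) * ∫⁻ a, w a * f a ^ q ∂μ) * H :=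
        mul_le_mul_left (mul_le_mul_right hj _) _
    _ = (H⁻¹ ^ q * H ^ (q - 1) * H) * ∫⁻ a, w a * f a ^ q ∂μ := by ring
    _ = ∫⁻ a, w a * f a ^ q ∂μ := by
        rw [ENNReal.inv_rpow, ← ENNReal.rpow_neg, ← ENNReal.rpow_add _ _ hH0 hHt,
          show -q + (q - 1) = (-1 : ℝ) by ring, ENNReal.rpow_neg_one,
          ENNReal.inv_mul_cancel hH0 hHt, one_mul]

lemma int_near {t : ℝ} {n : ℤ} (h : |t - n| < 2) : ⌊t⌋ - 1 ≤ n ∧ n ≤ ⌊t⌋ + 2 := by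
  rw [abs_lt] at h
  have h2 : (⌊t⌋ : ℝ) ≤ t := Int.floor_le t
  have h3 : t < ⌊t⌋ + 1 := Int.lt_floor_add_one t
  have ha : (⌊t⌋ : ℝ) < n + 2 := by linarith
  have hb : (n : ℝ) < ⌊t⌋ + 3 := by linarith
  have ha' : ⌊t⌋ < n + 2 := by exact_mod_cast ha
  have hb' : n < ⌊t⌋ + 3 := by exact_mod_cast hb
  omega

/-- The hat-kernel operator
`(Ku)(x) = ∑_k ψ_k(x) ‖ψ_k‖₁⁻¹ ∫ ψ_k u`, where `ψ_k(x) = ∏ᵢ χ(xᵢ/hᵢ - kᵢ)` and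
`‖ψ_k‖₁ = ∏ᵢ hᵢ`, is a contraction on `L^p(ℝ^d)` for every `p ∈ [1, ∞]`. -/
theorem stmt15 (d : ℕ) (hd : 1 ≤ d)
    (hstep : Fin d → ℝ) (hpos : ∀ i, 0 < hstep i)
    (ψ : (Fin d → ℤ) → (Fin d → ℝ) → ℝ)
    (hψ : ∀ k x, ψ k x = ∏ i : Fin d, chi (x i / hstep i - (k i : ℝ)))
    (K : ((Fin d → ℝ) → ℝ) → (Fin d → ℝ) → ℝ)
    (hK : ∀ u x, K u x = ∑ᶠ k : Fin d → ℤ,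
        ψ k x * (∏ i : Fin d, hstep i)⁻¹ * ∫ y : Fin d → ℝ, ψ k y * u y)
    (p : ℝ≥0∞) (hp : 1 ≤ p)
    (u : (Fin d → ℝ) → ℝ) (hu : MemLp u p volume) :
    MemLp (K u) p volume ∧ eLpNorm (K u) p volume ≤ eLpNorm u p volume := by
  have hψfun : ∀ k y, ψ k y = Psi hstep k y := hψ
  have hHpos : (0:ℝ) < ∏ i, hstep i := Finset.prod_pos fun i _ => hpos i
  set H : ℝ := ∏ i, hstep i with hHdef
  set H' : ℝ≥0∞ := ENNReal.ofReal H with hH'def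
  have hH'0 : H' ≠ 0 := (ENNReal.ofReal_pos.2 hHpos).ne'
  have hH't : H' ≠ ⊤ := ENNReal.ofReal_ne_top
  set I : (Fin d → ℤ) → ℝ := fun k => ∫ y, ψ k y * u y with hIdef
  -- representation of K u as a finite sum
  have hsupp : ∀ (x : Fin d → ℝ),
      (Function.support fun k => ψ k x * H⁻¹ * I k) ⊆ ↑(Tset hstep x) := by
    intro x k hk
    have hne : ψ k x ≠ 0 := by
      intro h0
      apply hk
      simp [h0]
    rw [hψfun] at hne
    exact Psi_mem_Tset hne
  have hKrep : ∀ x, K u x = ∑ k ∈ Tset hstep x, Psi hstep k x * H⁻¹ * I k := by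
    intro x
    rw [hK u x]
    rw [finsum_eq_sum_of_support_subset _ (hsupp x)]
    exact Finset.sum_congr rfl fun k _ => by rw [hψfun]
  -- continuity of K u
  have hKcont : Continuous (K u) := by
    rw [continuous_iff_continuousAt]
    intro x₀
    set T' : Finset (Fin d → ℤ) :=
      Fintype.piFinset fun i => Finset.Icc (⌊x₀ i / hstep i⌋ - 1) (⌊x₀ i / hstep i⌋ + 2) with hT'
    set N : Set (Fin d → ℝ) := Set.univ.pi fun i => Metric.ball (x₀ i) (hstep i) with hN
    have hNopen : IsOpen N := isOpen_set_pi Set.finite_univ fun i _ => Metric.isOpen_ball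
    have hNmem : x₀ ∈ N := by
      intro i _
      simpa using (hpos i)
    have heq : ∀ x ∈ N, K u x = ∑ k ∈ T', ψ k x * H⁻¹ * I k := by
      intro x hx
      rw [hK u x, finsum_eq_sum_of_support_subset]
      intro k hk
      have hne : ψ k x ≠ 0 := fun h0 => hk (by simp [h0])
      rw [hψfun] at hne
      rw [Finset.mem_coe, Fintype.mem_piFinset]
      intro i
      have hc : chi (x i / hstep i - k i) ≠ 0 := by
        intro h0
        exact hne (Finset.prod_eq_zero (Finset.mem_univ i) h0)
      have h1 : |x i / hstep i - k i| < 1 := abs_lt_one_of_chi_ne_zero hc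
      have hxi : |x i - x₀ i| < hstep i := by
        have := hx i (Set.mem_univ i)
        rwa [Metric.mem_ball, Real.dist_eq] at this
      have h2 : |x₀ i / hstep i - x i / hstep i| < 1 := by
        rw [div_sub_div_same, abs_div, abs_of_pos (hpos i), div_lt_one (hpos i)]
        rwa [abs_sub_comm] at hxi
      have h3 : |x₀ i / hstep i - k i| < 2 := by
        calc |x₀ i / hstep i - k i|
            ≤ |x₀ i / hstep i - x i / hstep i| + |x i / hstep i - k i| := abs_sub_le _ _ _
          _ < 2 := by linarith
      have := int_near h3
      simp only [Finset.mem_Icc]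
      exact this
    have hgc : ContinuousAt (fun x => ∑ k ∈ T', ψ k x * H⁻¹ * I k) x₀ := by
      apply Continuous.continuousAt
      apply continuous_finset_sum
      intro k _
      have : (fun x => ψ k x * H⁻¹ * I k) = fun x => Psi hstep k x * H⁻¹ * I k := by
        funext x; rw [hψfun]
      rw [this]
      exact ((Psi_continuous k).mul continuous_const).mul continuous_const
    exact hgc.congr (Filter.eventuallyEq_of_mem (hNopen.mem_nhds hNmem) heq).symm
  -- ENNReal setup
  set w : (Fin d → ℤ) → (Fin d → ℝ) → ℝ≥0∞ := fun k y => ENNReal.ofReal (Psi hstep k y) with hwdef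
  have hwmeas : ∀ k, Measurable (w k) := fun k => (Psi_continuous k).measurable.ennreal_ofReal
  have hwint : ∀ k, ∫⁻ y, w k y = H' := by
    intro k
    rw [hwdef]
    rw [← ofReal_integral_eq_lintegral_ofReal (Psi_integrable hpos k)
      (Filter.Eventually.of_forall (Psi_nonneg k)), Psi_integral hpos k]
  set a : (Fin d → ℤ) → ℝ≥0∞ := fun k => ∫⁻ y, w k y * ‖u y‖₊ with hadef
  set c : (Fin d → ℤ) → ℝ≥0∞ := fun k => H'⁻¹ * a k with hcdef
  have humeas : AEMeasurable (fun y => (‖u y‖₊ : ℝ≥0∞)) volume := hu.1.enorm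
  have hTsum1 : ∀ x, ∑ k ∈ Tset hstep x, w k x = 1 := by
    intro x
    rw [hwdef, ← ENNReal.ofReal_sum_of_nonneg (fun k _ => Psi_nonneg k x), sum_Psi_Tset x,
      ENNReal.ofReal_one]
  have hIbound : ∀ k, (‖I k‖₊ : ℝ≥0∞) ≤ a k := by
    intro k
    calc (‖I k‖₊ : ℝ≥0∞) ≤ ∫⁻ y, ‖ψ k y * u y‖₊ := enorm_integral_le_lintegral_enorm _
      _ = a k := by
        apply lintegral_congr
        intro y
        rw [nnnorm_mul, ENNReal.coe_mul, hψfun k y]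
        rw [← enorm_eq_nnnorm (Psi hstep k y), Real.enorm_eq_ofReal (Psi_nonneg k y)]
  have hpt : ∀ x, (‖K u x‖₊ : ℝ≥0∞) ≤ ∑ k ∈ Tset hstep x, w k x * c k := by
    intro x
    rw [hKrep x]
    calc (‖∑ k ∈ Tset hstep x, Psi hstep k x * H⁻¹ * I k‖₊ : ℝ≥0∞)
        ≤ ∑ k ∈ Tset hstep x, (‖Psi hstep k x * H⁻¹ * I k‖₊ : ℝ≥0∞) := by
          exact_mod_cast nnnorm_sum_le _ _
      _ ≤ ∑ k ∈ Tset hstep x, w k x * c k := by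
          apply Finset.sum_le_sum
          intro k _
          rw [nnnorm_mul, nnnorm_mul, ENNReal.coe_mul, ENNReal.coe_mul,
            ← enorm_eq_nnnorm (Psi hstep k x), Real.enorm_eq_ofReal (Psi_nonneg k x),
            ← enorm_eq_nnnorm H⁻¹, Real.enorm_eq_ofReal (le_of_lt (inv_pos.2 hHpos)),
            ENNReal.ofReal_inv_of_pos hHpos, mul_assoc]
          exact mul_le_mul_right (mul_le_mul_right (hIbound k) _) _
  rcases eq_or_ne p ⊤ with hptop | hptop
  · subst hptop
    have hbdd : ∀ x, (‖K u x‖₊ : ℝ≥0∞) ≤ eLpNormEssSup u volume := by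
      intro x
      refine le_trans (hpt x) ?_
      have hck : ∀ k, c k ≤ eLpNormEssSup u volume := by
        intro k
        rw [hcdef]
        have hak : a k ≤ H' * eLpNormEssSup u volume := by
          rw [hadef]
          calc ∫⁻ y, w k y * ‖u y‖₊ ≤ ∫⁻ y, w k y * eLpNormEssSup u volume := by
                apply lintegral_mono_ae
                filter_upwards [enorm_ae_le_eLpNormEssSup u volume] with y hy
                exact mul_le_mul_right hy _
            _ = H' * eLpNormEssSup u volume := by
                rw [lintegral_mul_const _ (hwmeas k), hwint k, mul_comm]
        calc H'⁻¹ * a k ≤ H'⁻¹ * (H' * eLpNormEssSup u volume) := mul_le_mul_right hak _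
          _ = eLpNormEssSup u volume := by
            rw [← mul_assoc, ENNReal.inv_mul_cancel hH'0 hH't, one_mul]
      calc ∑ k ∈ Tset hstep x, w k x * c k
          ≤ ∑ k ∈ Tset hstep x, w k x * eLpNormEssSup u volume :=
            Finset.sum_le_sum fun k _ => mul_le_mul_right (hck k) _
        _ = eLpNormEssSup u volume := by rw [← Finset.sum_mul, hTsum1 x, one_mul]
    have hle : eLpNorm (K u) ⊤ volume ≤ eLpNorm u ⊤ volume := by
      rw [eLpNorm_exponent_top, eLpNorm_exponent_top]
      exact essSup_le_of_ae_le _ (Filter.Eventually.of_forall hbdd)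
    exact ⟨⟨hKcont.aestronglyMeasurable, lt_of_le_of_lt hle hu.2⟩, hle⟩
  · have hp0 : p ≠ 0 := (lt_of_lt_of_le zero_lt_one hp).ne'
    set q : ℝ := p.toReal with hqdef
    have hq1 : 1 ≤ q := by
      rw [hqdef, ← ENNReal.toReal_one]
      exact ENNReal.toReal_mono hptop hp
    have hq0 : (0:ℝ) < q := by linarith
    have main : ∫⁻ x, (‖K u x‖₊ : ℝ≥0∞) ^ q ≤ ∫⁻ y, (‖u y‖₊ : ℝ≥0∞) ^ q := by
      have step1 : ∀ x, (‖K u x‖₊ : ℝ≥0∞) ^ q ≤ ∑' k, w k x * c k ^ q := by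
        intro x
        calc (‖K u x‖₊ : ℝ≥0∞) ^ q ≤ (∑ k ∈ Tset hstep x, w k x * c k) ^ q :=
              ENNReal.rpow_le_rpow (hpt x) hq0.le
          _ ≤ ∑ k ∈ Tset hstep x, w k x * c k ^ q :=
              ENNReal.rpow_arith_mean_le_arith_mean_rpow (Tset hstep x) (fun k => w k x) c (hTsum1 x) hq1
          _ ≤ ∑' k, w k x * c k ^ q := ENNReal.sum_le_tsum _
      calc ∫⁻ x, (‖K u x‖₊ : ℝ≥0∞) ^ q ≤ ∫⁻ x, ∑' k, w k x * c k ^ q :=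
            lintegral_mono step1
        _ = ∑' k, ∫⁻ x, w k x * c k ^ q :=
            lintegral_tsum fun k => ((hwmeas k).mul_const _).aemeasurable
        _ = ∑' k, c k ^ q * H' := by
            refine tsum_congr fun k => ?_
            rw [lintegral_mul_const _ (hwmeas k), hwint k, mul_comm]
        _ ≤ ∑' k, ∫⁻ y, w k y * (‖u y‖₊ : ℝ≥0∞) ^ q := by
            refine ENNReal.tsum_le_tsum fun k => ?_
            rw [hcdef, hadef]
            exact per_k_bound (hwmeas k).aemeasurable humeas hH'0 hH't (hwint k) hq1
        _ = ∫⁻ y, ∑' k, w k y * (‖u y‖₊ : ℝ≥0∞) ^ q :=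
            (lintegral_tsum fun k => ((hwmeas k).aemeasurable.mul (humeas.pow_const _))).symm
        _ = ∫⁻ y, (‖u y‖₊ : ℝ≥0∞) ^ q := by
            refine lintegral_congr fun y => ?_
            rw [ENNReal.tsum_mul_right]
            have h1 : ∑' k : Fin d → ℤ, w k y = 1 := by
              rw [tsum_eq_sum (s := Tset hstep y) ?_, hTsum1 y]
              intro k hk
              rw [hwdef]
              have h0 : Psi hstep k y = 0 := by
                by_contra h0
                exact hk (Psi_mem_Tset h0)
              simp [h0]
            rw [h1, one_mul]
    have hle : eLpNorm (K u) p volume ≤ eLpNorm u p volume := by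
      rw [eLpNorm_eq_lintegral_rpow_enorm_toReal hp0 hptop, eLpNorm_eq_lintegral_rpow_enorm_toReal hp0 hptop]
      exact ENNReal.rpow_le_rpow main (by positivity)
    exact ⟨⟨hKcont.aestronglyMeasurable, lt_of_le_of_lt hle hu.2⟩, hle⟩
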